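/- arXiv:2402.09754 — 2 statements merged into one kernel-verified Lean document; each statement's English description precedes it below -/
import Mathlib

section
/- Let X be any n×p real matrix and let R satisfy 1 ≤ R ≤ min(n,p) and R < p. For the right singular subspace function V_R of the standard SVD (with any fixed selection of singular vectors when they are not unique), there exists l ≤ R+1 such that (1,l) ∈ BP(V_R;X). In particular, bp_row(V_R;X) = 1 and bp_col(V_R;X) ≤ R+1. -/
noncomputable section
open scoped BigOperators
open Matrix

abbrev E (k : ℕ) := EuclideanSpace ℝ (Fin k)

noncomputable def canonAngle {k : ℕ} (V W : Submodule ℝ (E k)) : ℝ :=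
  Real.arccos (sInf {r : ℝ | ∃ w ∈ W, ‖w‖ = 1 ∧
    r = ‖(V.orthogonalProjection w : E k)‖})

variable {n p m : ℕ}

def BlockCorrupt (X Z : Matrix (Fin n) (Fin p) ℝ) (k l : ℕ) : Prop :=
  ∃ (I : Finset (Fin n)) (J : Finset (Fin p)), I.card = k ∧ J.card = l ∧
    ∀ i j, (i ∉ I ∨ j ∉ J) → Z i j = X i j

def RowCorrupt (X Z : Matrix (Fin n) (Fin p) ℝ) (k : ℕ) : Prop :=
  ∃ I : Finset (Fin n), I.card = k ∧ ∀ i ∉ I, ∀ j, Z i j = X i j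

def ColCorrupt (X Z : Matrix (Fin n) (Fin p) ℝ) (l : ℕ) : Prop :=
  ∃ J : Finset (Fin p), J.card = l ∧ ∀ j ∉ J, ∀ i, Z i j = X i j

def BreaksDownBlock (V : Matrix (Fin n) (Fin p) ℝ → Submodule ℝ (E m))
    (X : Matrix (Fin n) (Fin p) ℝ) (k l : ℕ) : Prop :=
  sSup {d : ℝ | ∃ Z, BlockCorrupt X Z k l ∧ d = canonAngle (V Z) (V X)} = Real.pi / 2

def BreaksDownRow (V : Matrix (Fin n) (Fin p) ℝ → Submodule ℝ (E m))
    (X : Matrix (Fin n) (Fin p) ℝ) (k : ℕ) : Prop :=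
  sSup {d : ℝ | ∃ Z, RowCorrupt X Z k ∧ d = canonAngle (V Z) (V X)} = Real.pi / 2

def BreaksDownCol (V : Matrix (Fin n) (Fin p) ℝ → Submodule ℝ (E m))
    (X : Matrix (Fin n) (Fin p) ℝ) (l : ℕ) : Prop :=
  sSup {d : ℝ | ∃ Z, ColCorrupt X Z l ∧ d = canonAngle (V Z) (V X)} = Real.pi / 2

noncomputable def bpRow (V : Matrix (Fin n) (Fin p) ℝ → Submodule ℝ (E m))
    (X : Matrix (Fin n) (Fin p) ℝ) : ℕ :=
  sInf {k : ℕ | 1 ≤ k ∧ k ≤ n ∧ BreaksDownRow V X k}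

noncomputable def bpCol (V : Matrix (Fin n) (Fin p) ℝ → Submodule ℝ (E m))
    (X : Matrix (Fin n) (Fin p) ℝ) : ℕ :=
  sInf {l : ℕ | 1 ≤ l ∧ l ≤ p ∧ BreaksDownCol V X l}

def IsBP (V : Matrix (Fin n) (Fin p) ℝ → Submodule ℝ (E m))
    (X : Matrix (Fin n) (Fin p) ℝ) (i j : ℕ) : Prop :=
  1 ≤ i ∧ i ≤ n ∧ 1 ≤ j ∧ j ≤ p ∧
  (∀ k l, i ≤ k → k ≤ n → j ≤ l → l ≤ p → BreaksDownBlock V X k l) ∧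
  (∀ k l, 1 ≤ k → 1 ≤ l → k ≤ i → l ≤ j → (k, l) ≠ (i, j) → ¬ BreaksDownBlock V X k l)

/-- A full orthonormal system of left singular vectors of `Y` (eigenvectors of `Y Yᵀ`)
with singular values `σ` arranged in decreasing order. -/
def IsLeftSingularSystem {n p : ℕ} (Y : Matrix (Fin n) (Fin p) ℝ)
    (u : Fin n → E n) (σ : Fin n → ℝ) : Prop :=
  Orthonormal ℝ u ∧ (∀ i, 0 ≤ σ i) ∧ (∀ i j : Fin n, i ≤ j → σ j ≤ σ i) ∧
  ∀ i, Matrix.toEuclideanLin (Y * Yᵀ) (u i) = ((σ i) ^ 2) • u i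

/-- A full orthonormal system of right singular vectors of `Y` (eigenvectors of `Yᵀ Y`)
with singular values `σ` arranged in decreasing order. -/
def IsRightSingularSystem {n p : ℕ} (Y : Matrix (Fin n) (Fin p) ℝ)
    (v : Fin p → E p) (σ : Fin p → ℝ) : Prop :=
  Orthonormal ℝ v ∧ (∀ j, 0 ≤ σ j) ∧ (∀ i j : Fin p, i ≤ j → σ j ≤ σ i) ∧
  ∀ j, Matrix.toEuclideanLin (Yᵀ * Y) (v j) = ((σ j) ^ 2) • v j

/-- `S` is an `R`-dimensional subspace of `ℝⁿ` spanned by left singular vectors of `Y`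
corresponding to its `R` largest singular values. -/
def IsLeftSingularSubspace {n p : ℕ} (Y : Matrix (Fin n) (Fin p) ℝ) (R : ℕ)
    (S : Submodule ℝ (E n)) : Prop :=
  ∃ (u : Fin n → E n) (σ : Fin n → ℝ), IsLeftSingularSystem Y u σ ∧
    S = Submodule.span ℝ {x | ∃ i : Fin n, (i : ℕ) < R ∧ x = u i}

/-- `S` is an `R`-dimensional subspace of `ℝᵖ` spanned by right singular vectors of `Y`
corresponding to its `R` largest singular values. -/
def IsRightSingularSubspace {n p : ℕ} (Y : Matrix (Fin n) (Fin p) ℝ) (R : ℕ)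
    (S : Submodule ℝ (E p)) : Prop :=
  ∃ (v : Fin p → E p) (σ : Fin p → ℝ), IsRightSingularSystem Y v σ ∧
    S = Submodule.span ℝ {x | ∃ j : Fin p, (j : ℕ) < R ∧ x = v j}
open RealInnerProductSpace in
lemma inner_gram (Z : Matrix (Fin n) (Fin p) ℝ) (a b : E p) :
    ⟪a, Matrix.toEuclideanLin (Zᵀ * Z) b⟫
      = ⟪Matrix.toEuclideanLin Z a, Matrix.toEuclideanLin Z b⟫ := by
  simp only [Matrix.toEuclideanLin_apply, PiLp.inner_apply, RCLike.inner_apply, conj_trivial]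
  simp only [mul_comm _ (WithLp.ofLp a _), mul_comm _ ((Z *ᵥ WithLp.ofLp a) _)]
  rw [← Matrix.mulVec_mulVec]
  rw [show ∀ (u : Fin p → ℝ) (w : Fin n → ℝ), ∑ j, u j * (Zᵀ *ᵥ w) j = (u ⬝ᵥ (Zᵀ *ᵥ w))
      from fun _ _ => rfl]
  rw [show ∀ (u : Fin n → ℝ) (w : Fin n → ℝ), ∑ j, u j * w j = (u ⬝ᵥ w) from fun _ _ => rfl]
  rw [Matrix.dotProduct_mulVec, Matrix.vecMul_transpose]

open RealInnerProductSpace in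
/-- the square of the largest singular value bounds the quadratic form of the Gram matrix -/
lemma gram_quad_le {Z : Matrix (Fin n) (Fin p) ℝ} {v : Fin p → E p} {σ : Fin p → ℝ}
    (hsys : IsRightSingularSystem Z v σ) (hp : 0 < p) (x : E p) (hx : ‖x‖ = 1) :
    ⟪Matrix.toEuclideanLin Z x, Matrix.toEuclideanLin Z x⟫ ≤ (σ ⟨0, hp⟩) ^ 2 := by
  obtain ⟨hv, hσ0, hσmono, heig⟩ := hsys
  haveI : Nonempty (Fin p) := ⟨⟨0, hp⟩⟩
  have hfr : Fintype.card (Fin p) = Module.finrank ℝ (E p) := by simp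
  set b0 : Module.Basis (Fin p) ℝ (E p) :=
    basisOfLinearIndependentOfCardEqFinrank hv.linearIndependent hfr with hb0def
  have hb0 : ⇑b0 = v := by
    simp [hb0def, coe_basisOfLinearIndependentOfCardEqFinrank]
  have hb0on : Orthonormal ℝ (⇑b0) := by rwa [hb0]
  set b : OrthonormalBasis (Fin p) ℝ (E p) := b0.toOrthonormalBasis hb0on with hbdef
  have hb : ⇑b = v := by rw [hbdef, Module.Basis.coe_toOrthonormalBasis, hb0]
  have key : ∀ y : E p,
      ⟪y, Matrix.toEuclideanLin (Zᵀ * Z) y⟫ = ∑ j, (σ j)^2 * ⟪v j, y⟫^2 := by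
    intro y
    have hpar := b.sum_inner_mul_inner y (Matrix.toEuclideanLin (Zᵀ * Z) y)
    rw [← hpar]
    refine Finset.sum_congr rfl fun j _ => ?_
    have h1 : ⟪b j, Matrix.toEuclideanLin (Zᵀ * Z) y⟫
        = ⟪y, Matrix.toEuclideanLin (Zᵀ * Z) (b j)⟫ := by
      rw [inner_gram, inner_gram, real_inner_comm]
    rw [h1, hb, heig j, real_inner_smul_right, real_inner_comm]
    ring
  have h2 := key x
  rw [inner_gram] at h2
  rw [h2]
  have hnorm : ∑ j, ⟪v j, x⟫^2 = 1 := by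
    have := b.sum_inner_mul_inner x x
    rw [real_inner_self_eq_norm_sq, hx] at this
    simp only [hb] at this
    calc ∑ j, ⟪v j, x⟫^2 = ∑ j, ⟪x, v j⟫ * ⟪v j, x⟫ := by
          refine Finset.sum_congr rfl fun j _ => ?_
          rw [real_inner_comm]; ring
      _ = 1 := by rw [this]; norm_num
  calc ∑ j, (σ j)^2 * ⟪v j, x⟫^2 ≤ ∑ j, (σ ⟨0, hp⟩)^2 * ⟪v j, x⟫^2 := by
        refine Finset.sum_le_sum fun j _ => ?_
        have : σ j ≤ σ ⟨0, hp⟩ := hσmono ⟨0, hp⟩ j (by exact Fin.mk_le_of_le_val (by simp))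
        have h0 := hσ0 j
        exact mul_le_mul_of_nonneg_right (by nlinarith) (sq_nonneg _)
    _ = (σ ⟨0, hp⟩)^2 := by rw [← Finset.mul_sum, hnorm, mul_one]
lemma canonAngle_nonneg {k : ℕ} (V W : Submodule ℝ (E k)) : 0 ≤ canonAngle V W :=
  Real.arccos_nonneg _

lemma canonAngle_le_pi_div_two {k : ℕ} (V W : Submodule ℝ (E k)) :
    canonAngle V W ≤ Real.pi / 2 := by
  apply Real.arccos_le_pi_div_two.mpr
  apply Real.sInf_nonneg
  rintro r ⟨w, -, -, rfl⟩
  exact norm_nonneg _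

open RealInnerProductSpace in
lemma corrupt_lin_apply (X : Matrix (Fin n) (Fin p) ℝ) (i₀ : Fin n) (yv : E p) (t : ℝ)
    (x : E p) :
    Matrix.toEuclideanLin
        (Matrix.of (fun i j => X i j + (if i = i₀ then t * yv j else 0))) x
      = Matrix.toEuclideanLin X x + (t * ⟪yv, x⟫) • (EuclideanSpace.single i₀ 1) := by
  refine PiLp.ext fun i => ?_
  simp only [Matrix.toEuclideanLin_apply,
    PiLp.add_apply, PiLp.smul_apply, EuclideanSpace.single_apply, Matrix.mulVec,
    dotProduct, Matrix.of_apply, PiLp.inner_apply, RCLike.inner_apply, conj_trivial,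
    smul_eq_mul]
  rw [Finset.sum_congr rfl (fun j _ => add_mul (X i j) _ (x j)), Finset.sum_add_distrib]
  by_cases hi : i = i₀ <;> simp [hi, Finset.mul_sum, mul_comm, mul_assoc, mul_left_comm]
open RealInnerProductSpace in
lemma exists_unit_orthogonal {p R : ℕ} (h : R + 1 ≤ p) (v : Fin p → E p) :
    ∃ y : E p, ‖y‖ = 1 ∧ (∀ j : Fin p, (j : ℕ) < R → ⟪v j, y⟫ = 0) ∧
      (∀ j : Fin p, j ∉ Finset.image (Fin.castLE h) Finset.univ → y j = 0) := by
  have hRp : R ≤ p := le_trans (Nat.le_succ R) h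
  -- the linear map sending coefficients to inner products with the first R singular vectors
  let φ : (Fin (R+1) → ℝ) →ₗ[ℝ] (Fin R → ℝ) :=
    { toFun := fun c => fun r => ∑ s, c s * v (Fin.castLE hRp r) (Fin.castLE h s)
      map_add' := by
        intro c d; funext r
        simp [add_mul, Finset.sum_add_distrib]
      map_smul' := by
        intro a c; funext r
        simp [Finset.mul_sum, mul_assoc] }
  have hker : LinearMap.ker φ ≠ ⊥ := by
    intro hbot
    have h1 := LinearMap.finrank_range_add_finrank_ker φ
    rw [hbot, finrank_bot, add_zero] at h1
    have h2 : Module.finrank ℝ (LinearMap.range φ) ≤ Module.finrank ℝ (Fin R → ℝ) :=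
      Submodule.finrank_le _
    rw [Module.finrank_fin_fun] at h2
    rw [Module.finrank_fin_fun] at h1
    omega
  obtain ⟨c, hcmem, hc0⟩ := Submodule.exists_mem_ne_zero_of_ne_bot hker
  -- build the vector supported on the first R+1 coordinates
  set y0 : E p := ∑ s : Fin (R+1), c s • (EuclideanSpace.single (Fin.castLE h s) (1:ℝ))
    with hy0def
  have hy0app : ∀ j : Fin p, y0 j
      = ∑ s : Fin (R+1), c s * (if j = Fin.castLE h s then 1 else 0) := by
    intro j
    rw [hy0def]
    rw [show (∑ s : Fin (R+1), c s • (EuclideanSpace.single (Fin.castLE h s) (1:ℝ))) j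
        = ∑ s : Fin (R+1), (c s • (EuclideanSpace.single (Fin.castLE h s) (1:ℝ))) j
        from by rw [WithLp.ofLp_sum]; exact Finset.sum_apply j Finset.univ _]
    refine Finset.sum_congr rfl fun s _ => ?_
    simp [EuclideanSpace.single_apply]
  have hinj : Function.Injective (Fin.castLE h) := Fin.castLE_injective h
  have hy0supp : ∀ j : Fin p, j ∉ Finset.image (Fin.castLE h) Finset.univ → y0 j = 0 := by
    intro j hj
    rw [hy0app]
    refine Finset.sum_eq_zero fun s _ => ?_
    have : j ≠ Fin.castLE h s := by
      intro hEq; exact hj (Finset.mem_image.mpr ⟨s, Finset.mem_univ s, hEq.symm⟩)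
    simp [this]
  have hy0at : ∀ s : Fin (R+1), y0 (Fin.castLE h s) = c s := by
    intro s
    rw [hy0app]
    rw [Finset.sum_eq_single s]
    · simp
    · intro s' _ hs'
      have : Fin.castLE h s ≠ Fin.castLE h s' := fun hEq => hs' (hinj hEq).symm
      simp [this]
    · intro hs; exact absurd (Finset.mem_univ s) hs
  have hy00 : y0 ≠ 0 := by
    intro hEq
    apply hc0
    funext s
    have := hy0at s
    rw [hEq] at this
    simpa using this.symm
  have hy0orth : ∀ j : Fin p, (j : ℕ) < R → ⟪v j, y0⟫ = 0 := by
    intro j hj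
    have hφ : φ c = 0 := hcmem
    have hφr : (φ c) ⟨(j : ℕ), hj⟩ = 0 := by rw [hφ]; rfl
    have hcast : Fin.castLE hRp ⟨(j : ℕ), hj⟩ = j := by
      apply Fin.ext; rfl
    rw [show ⟪v j, y0⟫ = ∑ s : Fin (R+1), c s * v j (Fin.castLE h s) from ?_]
    · rw [← hcast]; exact hφr
    · rw [hy0def]
      rw [inner_sum]
      refine Finset.sum_congr rfl fun s _ => ?_
      rw [real_inner_smul_right, EuclideanSpace.inner_single_right]
      simp [mul_comm]
  refine ⟨‖y0‖⁻¹ • y0, ?_, ?_, ?_⟩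
  · rw [norm_smul]
    simp [norm_inv, inv_mul_cancel₀ (norm_ne_zero_iff.mpr hy00)]
  · intro j hj
    rw [real_inner_smul_right, hy0orth j hj, mul_zero]
  · intro j hj
    have : (‖y0‖⁻¹ • y0) j = ‖y0‖⁻¹ * y0 j := rfl
    rw [this, hy0supp j hj, mul_zero]
open RealInnerProductSpace in
lemma exists_unit_span_orthogonal {p R : ℕ} (hR1 : 1 ≤ R) (h : Fin R → E p)
    (hh : Orthonormal ℝ h) (q : Fin (R-1) → E p) :
    ∃ x : E p, ‖x‖ = 1 ∧ x ∈ Submodule.span ℝ (Set.range h) ∧ ∀ s, ⟪q s, x⟫ = 0 := by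
  let φ : (Fin R → ℝ) →ₗ[ℝ] (Fin (R-1) → ℝ) :=
    { toFun := fun c => fun s => ∑ r, c r * ⟪q s, h r⟫
      map_add' := by
        intro c d; funext s
        simp [add_mul, Finset.sum_add_distrib]
      map_smul' := by
        intro a c; funext s
        simp [Finset.mul_sum, mul_assoc] }
  have hker : LinearMap.ker φ ≠ ⊥ := by
    intro hbot
    have h1 := LinearMap.finrank_range_add_finrank_ker φ
    rw [hbot, finrank_bot, add_zero] at h1
    have h2 : Module.finrank ℝ (LinearMap.range φ) ≤ Module.finrank ℝ (Fin (R-1) → ℝ) :=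
      Submodule.finrank_le _
    rw [Module.finrank_fin_fun] at h2
    rw [Module.finrank_fin_fun] at h1
    omega
  obtain ⟨c, hcmem, hc0⟩ := Submodule.exists_mem_ne_zero_of_ne_bot hker
  set x0 : E p := ∑ r, c r • h r with hx0def
  have hx00 : x0 ≠ 0 := by
    intro hEq
    exact hc0 (funext (Fintype.linearIndependent_iff.mp hh.linearIndependent c hEq))
  have hx0orth : ∀ s, ⟪q s, x0⟫ = 0 := by
    intro s
    have hφ : φ c = 0 := hcmem
    have : (φ c) s = 0 := by rw [hφ]; rfl
    rw [hx0def, inner_sum]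
    rw [Finset.sum_congr rfl (fun r _ => real_inner_smul_right (q s) (h r) (c r))]
    exact this
  have hx0mem : x0 ∈ Submodule.span ℝ (Set.range h) := by
    rw [hx0def]
    exact Submodule.sum_mem _ fun r _ =>
      Submodule.smul_mem _ _ (Submodule.subset_span ⟨r, rfl⟩)
  refine ⟨‖x0‖⁻¹ • x0, ?_, ?_, ?_⟩
  · rw [norm_smul]
    simp [norm_inv, inv_mul_cancel₀ (norm_ne_zero_iff.mpr hx00)]
  · exact Submodule.smul_mem _ _ hx0mem
  · intro s
    rw [real_inner_smul_right, hx0orth s, mul_zero]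
set_option maxHeartbeats 1000000 in
open RealInnerProductSpace in
lemma key_corrupt {n p : ℕ} {R : ℕ} (hR1 : 1 ≤ R) (hRn : R ≤ n) (hRp : R < p)
    (V : Matrix (Fin n) (Fin p) ℝ → Submodule ℝ (E p))
    (hV : ∀ Y, IsRightSingularSubspace Y R (V Y))
    (X : Matrix (Fin n) (Fin p) ℝ) (c : ℝ) (hc : c < Real.pi / 2) :
    ∃ Z, BlockCorrupt X Z 1 (R+1) ∧ c < canonAngle (V Z) (V X) := by
  have hp : 0 < p := by omega
  have hn : 0 < n := by omega
  have hsucc : R + 1 ≤ p := hRp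
  set i₀ : Fin n := ⟨0, hn⟩
  set j0 : Fin p := ⟨0, hp⟩
  obtain ⟨vX, σX, hsysX, hVX⟩ := hV X
  obtain ⟨y, hy1, hyorth, hysupp⟩ := exists_unit_orthogonal hsucc vX
  -- y is orthogonal to V X
  have hymem : y ∈ (V X)ᗮ := by
    rw [hVX]
    rw [Submodule.mem_orthogonal]
    intro u hu
    induction hu using Submodule.span_induction with
    | mem x hx => obtain ⟨j, hj, rfl⟩ := hx; exact hyorth j hj
    | zero => exact inner_zero_left _
    | add x z _ _ hx hz => rw [inner_add_left, hx, hz, add_zero]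
    | smul a x _ hx => rw [real_inner_smul_left, hx, mul_zero]
  have hproj : Submodule.orthogonalProjection (V X) y = 0 :=
    Submodule.orthogonalProjectionOnto_apply_of_mem_orthogonal hymem
  -- operator norm bound for X
  set T := LinearMap.toContinuousLinearMap (Matrix.toEuclideanLin X) with hTdef
  set C : ℝ := ‖T‖ + 1 with hCdef
  have hC1 : 1 ≤ C := by have := norm_nonneg T; linarith
  have hC0 : 0 < C := by linarith
  have hCb : ∀ x : E p, ‖Matrix.toEuclideanLin X x‖ ≤ C * ‖x‖ := by
    intro x
    have h1 : ‖T x‖ ≤ ‖T‖ * ‖x‖ := T.le_opNorm x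
    have h2 : T x = Matrix.toEuclideanLin X x := by
      rw [hTdef]; simp
    rw [h2] at h1
    have := norm_nonneg x
    nlinarith
  have main : ∀ t : ℝ, C < t → ∃ Z, BlockCorrupt X Z 1 (R+1) ∧
      ∃ s : ℝ, 0 ≤ s ∧ s ≤ C / (t - C) ∧ canonAngle (V Z) (V X) = Real.arccos s := by
    intro t ht
    have htC : 0 < t - C := by linarith
    have ht0 : 0 < t := by linarith
    set Z : Matrix (Fin n) (Fin p) ℝ :=
      Matrix.of (fun i j => X i j + (if i = i₀ then t * y j else 0)) with hZdef
    have hcor : BlockCorrupt X Z 1 (R+1) := by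
      refine ⟨{i₀}, Finset.image (Fin.castLE hsucc) Finset.univ, by simp, ?_, ?_⟩
      · rw [Finset.card_image_of_injective _ (Fin.castLE_injective hsucc)]
        simp
      · intro i j hij
        rcases hij with hi | hj
        · have : i ≠ i₀ := by simpa using hi
          simp [hZdef, this]
        · simp [hZdef, hysupp j hj]
    have hZapp : ∀ x : E p, Matrix.toEuclideanLin Z x
        = Matrix.toEuclideanLin X x + (t * ⟪y, x⟫) • (EuclideanSpace.single i₀ 1) :=
      corrupt_lin_apply X i₀ y t
    obtain ⟨v', σ', hsysZ, hVZ⟩ := hV Z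
    set u : E p := v' j0 with hudef
    have hu1 : ‖u‖ = 1 := hsysZ.1.1 j0
    have hMu : Matrix.toEuclideanLin (Zᵀ * Z) u = (σ' j0) ^ 2 • u := hsysZ.2.2.2 j0
    have hσ0 : 0 ≤ σ' j0 := hsysZ.2.1 j0
    have hyi : ⟪y, y⟫ = 1 := by
      rw [real_inner_self_eq_norm_sq, hy1]; norm_num
    have hui : ⟪u, u⟫ = 1 := by
      rw [real_inner_self_eq_norm_sq, hu1]; norm_num
    -- σ' j0 is large
    have hσt : t - C ≤ σ' j0 := by
      have h1 : ⟪Matrix.toEuclideanLin Z y, Matrix.toEuclideanLin Z y⟫ ≤ (σ' j0) ^ 2 :=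
        gram_quad_le hsysZ hp y hy1
      have h2 : Matrix.toEuclideanLin Z y
          = Matrix.toEuclideanLin X y + t • (EuclideanSpace.single i₀ 1) := by
        rw [hZapp y, hyi, mul_one]
      have h3 : ‖t • (EuclideanSpace.single i₀ (1:ℝ) : E n)‖ = t := by
        rw [norm_smul, EuclideanSpace.norm_single]
        simp [abs_of_pos ht0]
      have h4 : ‖Matrix.toEuclideanLin X y‖ ≤ C := by
        have := hCb y; rwa [hy1, mul_one] at this
      have h5 : t - C ≤ ‖Matrix.toEuclideanLin Z y‖ := by
        have htri : ‖t • (EuclideanSpace.single i₀ (1:ℝ) : E n)‖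
            ≤ ‖Matrix.toEuclideanLin Z y‖ + ‖Matrix.toEuclideanLin X y‖ := by
          calc ‖t • (EuclideanSpace.single i₀ (1:ℝ) : E n)‖
              = ‖Matrix.toEuclideanLin Z y - Matrix.toEuclideanLin X y‖ := by rw [h2, add_sub_cancel_left]
            _ ≤ _ := norm_sub_le _ _
        rw [h3] at htri; linarith
      rw [real_inner_self_eq_norm_sq] at h1
      nlinarith [norm_nonneg (Matrix.toEuclideanLin Z y)]
    have hσpos : 0 < σ' j0 := lt_of_lt_of_le htC hσt
    -- the component of u orthogonal to y
    set a : ℝ := ⟪y, u⟫ with hadef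
    set w : E p := u - a • y with hwdef
    have hyu : ⟪y, u⟫ = a := hadef.symm
    have hcomm : ⟪u, y⟫ = a := by rw [hadef]; exact real_inner_comm y u
    have hyw : ⟪y, w⟫ = 0 := by
      rw [hwdef, inner_sub_right, real_inner_smul_right, hyi, mul_one, hyu, sub_self]
    have hwu : ⟪w, u⟫ = 1 - a^2 := by
      simp only [hwdef, inner_sub_left, real_inner_smul_left, hui, hyu]
      ring
    have hww : ⟪w, w⟫ = 1 - a^2 := by
      simp only [hwdef, inner_sub_left, inner_sub_right, real_inner_smul_left,
        real_inner_smul_right, hui, hyi, hyu, hcomm]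
      ring
    have hnw : ‖w‖^2 = 1 - a^2 := by rw [← real_inner_self_eq_norm_sq, hww]
    have hZw : Matrix.toEuclideanLin Z w = Matrix.toEuclideanLin X w := by
      rw [hZapp w, hyw, mul_zero, zero_smul, add_zero]
    have hZu : ‖Matrix.toEuclideanLin Z u‖ = σ' j0 := by
      have h1 : ⟪Matrix.toEuclideanLin Z u, Matrix.toEuclideanLin Z u⟫ = (σ' j0)^2 := by
        rw [← inner_gram, hMu, real_inner_smul_right, hui, mul_one]
      rw [real_inner_self_eq_norm_sq] at h1
      calc ‖Matrix.toEuclideanLin Z u‖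
          = Real.sqrt (‖Matrix.toEuclideanLin Z u‖^2) := (Real.sqrt_sq (norm_nonneg _)).symm
        _ = Real.sqrt ((σ' j0)^2) := by rw [h1]
        _ = σ' j0 := Real.sqrt_sq hσ0
    -- the key chain of inequalities
    have hch : (σ' j0)^2 * ‖w‖^2 ≤ (C * ‖w‖) * σ' j0 := by
      have e1 : (σ' j0)^2 * ‖w‖^2 = ⟪w, Matrix.toEuclideanLin (Zᵀ * Z) u⟫ := by
        rw [hMu, real_inner_smul_right, hwu, hnw]
      have e2 : ⟪w, Matrix.toEuclideanLin (Zᵀ * Z) u⟫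
          = ⟪Matrix.toEuclideanLin X w, Matrix.toEuclideanLin Z u⟫ := by
        rw [inner_gram, hZw]
      have e3 : ⟪Matrix.toEuclideanLin X w, Matrix.toEuclideanLin Z u⟫
          ≤ ‖Matrix.toEuclideanLin X w‖ * ‖Matrix.toEuclideanLin Z u‖ :=
        real_inner_le_norm _ _
      have e4 : ‖Matrix.toEuclideanLin X w‖ * ‖Matrix.toEuclideanLin Z u‖
          ≤ (C * ‖w‖) * σ' j0 := by
        rw [hZu]
        exact mul_le_mul_of_nonneg_right (hCb w) hσ0
      linarith
    have h5 : σ' j0 * ‖w‖ ≤ C := by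
      nlinarith [norm_nonneg w, mul_nonneg hσ0 (norm_nonneg w)]
    have hwb : ‖w‖ ≤ C / (t - C) := by
      rw [le_div_iff₀ htC]
      have h6 : ‖w‖ * (t - C) ≤ ‖w‖ * σ' j0 := mul_le_mul_of_nonneg_left hσt (norm_nonneg w)
      have h7 : ‖w‖ * σ' j0 ≤ C := by rw [mul_comm]; exact h5
      linarith
    -- bound the projection of u onto V X
    have hprojw : ‖(Submodule.orthogonalProjection (V X) u : E p)‖ ≤ C / (t - C) := by
      have hdecomp : u = w + a • y := by rw [hwdef]; abel
      have h6 : Submodule.orthogonalProjection (V X) u = Submodule.orthogonalProjection (V X) w := by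
        rw [hdecomp, map_add, _root_.map_smul, hproj, smul_zero, add_zero]
      have h7 : ‖(Submodule.orthogonalProjection (V X) w : E p)‖ ≤ ‖w‖ := by
        have hop := (Submodule.orthogonalProjection (V X)).le_opNorm w
        have hle1 := Submodule.orthogonalProjection_norm_le (V X)
        have hn0 := norm_nonneg w
        calc ‖(Submodule.orthogonalProjection (V X) w : E p)‖ = ‖Submodule.orthogonalProjection (V X) w‖ := rfl
          _ ≤ ‖Submodule.orthogonalProjection (V X)‖ * ‖w‖ := hop
          _ ≤ 1 * ‖w‖ := mul_le_mul_of_nonneg_right hle1 hn0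
          _ = ‖w‖ := one_mul _
      rw [h6]
      exact le_trans h7 hwb
    -- a unit vector in V X orthogonal to the non-top singular vectors of Z
    have hRple : R ≤ p := le_of_lt hRp
    set g : Fin R → E p := fun r => vX (Fin.castLE hRple r) with hgdef
    have hgON : Orthonormal ℝ g := hsysX.1.comp _ (Fin.castLE_injective hRple)
    have hspan : V X = Submodule.span ℝ (Set.range g) := by
      rw [hVX]
      congr 1
      ext z
      constructor
      · rintro ⟨j, hj, rfl⟩
        exact ⟨⟨(j : ℕ), hj⟩, rfl⟩
      · rintro ⟨r, rfl⟩
        exact ⟨Fin.castLE hRple r, by simpa using r.isLt, rfl⟩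
    set q : Fin (R-1) → E p := fun s => v' ⟨(s : ℕ)+1, by have := s.isLt; omega⟩ with hqdef
    obtain ⟨x, hx1, hxmem0, hxorth⟩ := exists_unit_span_orthogonal hR1 g hgON q
    have hxmem : x ∈ V X := by rw [hspan]; exact hxmem0
    have hxv' : ∀ j : Fin p, (j : ℕ) < R → j ≠ j0 → ⟪v' j, x⟫ = 0 := by
      intro j hjR hj0
      have hj1 : 1 ≤ (j : ℕ) := by
        rcases Nat.eq_zero_or_pos (j : ℕ) with h0 | h1
        · exact absurd (Fin.ext h0 : j = j0) hj0
        · exact h1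
      have hlt : ((j : ℕ) - 1) + 1 < p := by have := j.isLt; omega
      have harg : j = ⟨((j : ℕ) - 1) + 1, hlt⟩ :=
        Fin.ext (show (j : ℕ) = ((j : ℕ) - 1) + 1 by omega)
      rw [harg]
      exact hxorth ⟨(j : ℕ) - 1, by omega⟩
    have hkey : ∀ z ∈ V Z, ⟪x, z⟫ = ⟪u, x⟫ * ⟪u, z⟫ := by
      intro z hz
      rw [hVZ] at hz
      induction hz using Submodule.span_induction with
      | mem z hzx =>
        obtain ⟨j, hj, rfl⟩ := hzx
        by_cases hje : j = j0
        · subst hje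
          rw [← hudef, hui, mul_one]
          exact real_inner_comm u x
        · have h1 : ⟪v' j, x⟫ = 0 := hxv' j hj hje
          have h2 : ⟪u, v' j⟫ = 0 := by
            rw [hudef]
            exact hsysZ.1.2 (fun hEq => hje hEq.symm)
          rw [real_inner_comm (v' j) x, h1, h2, mul_zero]
      | zero => simp
      | add z1 z2 _ _ ih1 ih2 => rw [inner_add_right, inner_add_right, ih1, ih2]; ring
      | smul b z _ ih => rw [real_inner_smul_right, real_inner_smul_right, ih]; ring
    -- the projection of x onto V Z is small
    set P : E p := (Submodule.orthogonalProjection (V Z) x : E p) with hPdef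
    have hPmem : P ∈ V Z := by rw [hPdef]; exact (Submodule.orthogonalProjection (V Z) x).2
    have hP1 : ⟪x, P⟫ = ‖P‖^2 := by
      have h0 := Submodule.starProjection_inner_eq_zero x P hPmem
      rw [inner_sub_left] at h0
      rw [← real_inner_self_eq_norm_sq]
      have h0' : ⟪x, P⟫ - ⟪P, P⟫ = 0 := h0
      linarith
    have hP2 : ‖P‖^2 ≤ |⟪u, x⟫| * ‖P‖ := by
      rw [← hP1, hkey P hPmem]
      calc ⟪u, x⟫ * ⟪u, P⟫ ≤ |⟪u, x⟫ * ⟪u, P⟫| := le_abs_self _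
        _ = |⟪u, x⟫| * |⟪u, P⟫| := abs_mul _ _
        _ ≤ |⟪u, x⟫| * (‖u‖ * ‖P‖) :=
            mul_le_mul_of_nonneg_left (abs_real_inner_le_norm u P) (abs_nonneg _)
        _ = |⟪u, x⟫| * ‖P‖ := by rw [hu1, one_mul]
    have hPle : ‖P‖ ≤ |⟪u, x⟫| := by
      rcases eq_or_lt_of_le (norm_nonneg P) with h0 | h0
      · rw [← h0]; exact abs_nonneg _
      · have h3 : ‖P‖ * ‖P‖ ≤ |⟪u, x⟫| * ‖P‖ := by
          calc ‖P‖ * ‖P‖ = ‖P‖^2 := (pow_two ‖P‖).symm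
            _ ≤ |⟪u, x⟫| * ‖P‖ := hP2
        exact le_of_mul_le_mul_right h3 h0
    have hux : |⟪u, x⟫| ≤ C / (t - C) := by
      have h0 := Submodule.starProjection_inner_eq_zero u x hxmem
      rw [inner_sub_left] at h0
      have h1 : ⟪u, x⟫ = ⟪(Submodule.orthogonalProjection (V X) u : E p), x⟫ := by
        have h0' : ⟪u, x⟫ - ⟪(Submodule.orthogonalProjection (V X) u : E p), x⟫ = 0 := h0
        linarith
      rw [h1]
      calc |⟪(Submodule.orthogonalProjection (V X) u : E p), x⟫|
          ≤ ‖(Submodule.orthogonalProjection (V X) u : E p)‖ * ‖x‖ := abs_real_inner_le_norm _ _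
        _ = ‖(Submodule.orthogonalProjection (V X) u : E p)‖ := by rw [hx1, mul_one]
        _ ≤ C / (t - C) := hprojw
    refine ⟨Z, hcor, sInf {r : ℝ | ∃ z ∈ V X, ‖z‖ = 1 ∧
      r = ‖(Submodule.orthogonalProjection (V Z) z : E p)‖}, ?_, ?_, rfl⟩
    · apply Real.sInf_nonneg
      rintro r ⟨z, -, -, rfl⟩
      exact norm_nonneg _
    · have hmem : ‖(Submodule.orthogonalProjection (V Z) x : E p)‖ ∈ {r : ℝ | ∃ z ∈ V X, ‖z‖ = 1 ∧
          r = ‖(Submodule.orthogonalProjection (V Z) z : E p)‖} := ⟨x, hxmem, hx1, rfl⟩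
      have hbdd : BddBelow {r : ℝ | ∃ z ∈ V X, ‖z‖ = 1 ∧
          r = ‖(Submodule.orthogonalProjection (V Z) z : E p)‖} := by
        refine ⟨0, ?_⟩
        rintro r ⟨z, -, -, rfl⟩
        exact norm_nonneg _
      refine le_trans (csInf_le hbdd hmem) ?_
      rw [← hPdef]
      exact le_trans hPle hux
  -- choose t according to c
  rcases lt_or_ge c 0 with hc0 | hc0
  · obtain ⟨Z, hcor, s, hs0, _, heq⟩ := main (C + 1) (by linarith)
    refine ⟨Z, hcor, ?_⟩
    rw [heq]
    exact lt_of_lt_of_le hc0 (Real.arccos_nonneg s)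
  · have hcos : 0 < Real.cos c := by
      apply Real.cos_pos_of_mem_Ioo
      constructor
      · have := Real.pi_pos; linarith
      · exact hc
    set t : ℝ := C + C / Real.cos c + 1 with htdef
    have ht : C < t := by
      have : 0 < C / Real.cos c := div_pos hC0 hcos
      rw [htdef]; linarith
    obtain ⟨Z, hcor, s, hs0, hsb, heq⟩ := main t ht
    have hb : C / (t - C) < Real.cos c := by
      have h1 : t - C = C / Real.cos c + 1 := by rw [htdef]; ring
      have h2 : 0 < C / Real.cos c := div_pos hC0 hcos
      have h3 : C / (C / Real.cos c + 1) < C / (C / Real.cos c) :=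
        div_lt_div_of_pos_left hC0 h2 (lt_add_one _)
      have h4 : C / (C / Real.cos c) = Real.cos c := by
        field_simp
      rw [h1]
      exact h3.trans_eq h4
    refine ⟨Z, hcor, ?_⟩
    rw [heq]
    by_contra hcon
    push_neg at hcon
    have ha1 : Real.cos c ≤ Real.cos (Real.arccos s) :=
      Real.cos_le_cos_of_nonneg_of_le_pi (Real.arccos_nonneg s)
        (by have := Real.pi_pos; linarith) hcon
    have hs1 : s ≤ 1 := by
      have := Real.cos_le_one c
      linarith [lt_of_le_of_lt hsb hb]
    rw [Real.cos_arccos (by linarith) hs1] at ha1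
    linarith [lt_of_le_of_lt hsb hb]
lemma pi_div_two_pos' : (0:ℝ) < Real.pi / 2 := by
  have := Real.pi_pos; linarith

lemma sSup_angle_eq {S : Set ℝ} (hub : ∀ d ∈ S, d ≤ Real.pi / 2)
    (hdense : ∀ c < Real.pi / 2, ∃ d ∈ S, c < d) : sSup S = Real.pi / 2 := by
  apply le_antisymm (Real.sSup_le hub pi_div_two_pos'.le)
  apply le_of_forall_lt
  intro c hc
  obtain ⟨d, hd, hcd⟩ := hdense c hc
  exact lt_of_lt_of_le hcd (le_csSup ⟨Real.pi / 2, hub⟩ hd)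

lemma dense_of_sSup {A : Set ℝ} (hA : sSup A = Real.pi / 2) :
    ∀ c < Real.pi / 2, ∃ d ∈ A, c < d := by
  intro c hc
  by_contra hno
  push_neg at hno
  have h1 : sSup A ≤ max c 0 :=
    Real.sSup_le (fun d hd => le_max_of_le_left (hno d hd)) (le_max_right _ _)
  rw [hA] at h1
  have h2 : max c 0 < Real.pi / 2 := max_lt hc pi_div_two_pos'
  linarith

lemma blockCorrupt_mono {X Z : Matrix (Fin n) (Fin p) ℝ} {k l k' l' : ℕ}
    (h : BlockCorrupt X Z k l) (hk : k ≤ k') (hk' : k' ≤ n) (hl : l ≤ l') (hl' : l' ≤ p) :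
    BlockCorrupt X Z k' l' := by
  obtain ⟨I, J, hI, hJ, hout⟩ := h
  obtain ⟨I', hII, -, hI'⟩ := Finset.exists_subsuperset_card_eq (t := Finset.univ) (n := k')
    (Finset.subset_univ I) (by rw [hI]; exact hk) (by simpa using hk')
  obtain ⟨J', hJJ, -, hJ'⟩ := Finset.exists_subsuperset_card_eq (t := Finset.univ) (n := l')
    (Finset.subset_univ J) (by rw [hJ]; exact hl) (by simpa using hl')
  refine ⟨I', J', hI', hJ', fun i j hij => ?_⟩
  apply hout
  rcases hij with hi | hj
  · exact Or.inl (fun hmem => hi (hII hmem))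
  · exact Or.inr (fun hmem => hj (hJJ hmem))

lemma breaksBlock_mono {V : Matrix (Fin n) (Fin p) ℝ → Submodule ℝ (E p)}
    {X : Matrix (Fin n) (Fin p) ℝ} {k l k' l' : ℕ}
    (h : BreaksDownBlock V X k l) (hk : k ≤ k') (hk' : k' ≤ n) (hl : l ≤ l') (hl' : l' ≤ p) :
    BreaksDownBlock V X k' l' := by
  apply sSup_angle_eq
  · rintro d ⟨Z, -, rfl⟩
    exact canonAngle_le_pi_div_two _ _
  · intro c hc
    obtain ⟨d, ⟨Z, hZ, rfl⟩, hcd⟩ := dense_of_sSup h c hc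
    exact ⟨_, ⟨Z, blockCorrupt_mono hZ hk hk' hl hl', rfl⟩, hcd⟩

lemma breaksRow_of_block {V : Matrix (Fin n) (Fin p) ℝ → Submodule ℝ (E p)}
    {X : Matrix (Fin n) (Fin p) ℝ} {k l : ℕ}
    (h : BreaksDownBlock V X k l) : BreaksDownRow V X k := by
  apply sSup_angle_eq
  · rintro d ⟨Z, -, rfl⟩
    exact canonAngle_le_pi_div_two _ _
  · intro c hc
    obtain ⟨d, ⟨Z, ⟨I, J, hI, hJ, hout⟩, rfl⟩, hcd⟩ := dense_of_sSup h c hc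
    exact ⟨_, ⟨Z, ⟨I, hI, fun i hi j => hout i j (Or.inl hi)⟩, rfl⟩, hcd⟩

lemma breaksCol_of_block {V : Matrix (Fin n) (Fin p) ℝ → Submodule ℝ (E p)}
    {X : Matrix (Fin n) (Fin p) ℝ} {k l : ℕ}
    (h : BreaksDownBlock V X k l) : BreaksDownCol V X l := by
  apply sSup_angle_eq
  · rintro d ⟨Z, -, rfl⟩
    exact canonAngle_le_pi_div_two _ _
  · intro c hc
    obtain ⟨d, ⟨Z, ⟨I, J, hI, hJ, hout⟩, rfl⟩, hcd⟩ := dense_of_sSup h c hc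
    exact ⟨_, ⟨Z, ⟨J, hJ, fun j hj i => hout i j (Or.inr hj)⟩, rfl⟩, hcd⟩

open RealInnerProductSpace in
lemma canonAngle_self {W : Submodule ℝ (E p)} (hW : ∃ w ∈ W, ‖w‖ = (1:ℝ)) :
    canonAngle W W = 0 := by
  obtain ⟨w0, hw0, hw01⟩ := hW
  have hset : {r : ℝ | ∃ w ∈ W, ‖w‖ = 1 ∧ r = ‖(Submodule.orthogonalProjection W w : E p)‖} = {1} := by
    ext r
    constructor
    · rintro ⟨w, hw, h1, rfl⟩
      have : (Submodule.orthogonalProjection W w : E p) = w :=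
        congrArg Subtype.val (Submodule.orthogonalProjection_mem_subspace_eq_self ⟨w, hw⟩)
      simp [this, h1]
    · rintro rfl
      refine ⟨w0, hw0, hw01, ?_⟩
      have : (Submodule.orthogonalProjection W w0 : E p) = w0 :=
        congrArg Subtype.val (Submodule.orthogonalProjection_mem_subspace_eq_self ⟨w0, hw0⟩)
      simp [this, hw01]
  unfold canonAngle
  rw [hset, csInf_singleton, Real.arccos_one]

lemma not_breaks_zero {V : Matrix (Fin n) (Fin p) ℝ → Submodule ℝ (E p)}
    {X : Matrix (Fin n) (Fin p) ℝ} (hW : ∃ w ∈ V X, ‖w‖ = (1:ℝ)) :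
    ¬ BreaksDownBlock V X 1 0 := by
  intro h
  unfold BreaksDownBlock at h
  have hsub : ∀ d ∈ {d : ℝ | ∃ Z, BlockCorrupt X Z 1 0 ∧ d = canonAngle (V Z) (V X)},
      d ≤ 0 := by
    rintro d ⟨Z, ⟨I, J, hI, hJ, hout⟩, rfl⟩
    have hZX : Z = X := by
      apply Matrix.ext
      intro i j
      apply hout
      right
      rw [Finset.card_eq_zero] at hJ
      rw [hJ]
      exact Finset.notMem_empty j
    rw [hZX, canonAngle_self hW]
  have := Real.sSup_le hsub le_rfl
  rw [h] at this
  linarith [pi_div_two_pos']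
/-- for the right singular subspace function `V_R` of the standard SVD
(any fixed selection), there is `l ≤ R+1` with `(1,l) ∈ BP(V_R;X)`; in particular
`bp_row(V_R;X) = 1` and `bp_col(V_R;X) ≤ R+1`. -/
theorem stmt5 {n p : ℕ} (R : ℕ) (hR1 : 1 ≤ R) (hRmin : R ≤ min n p) (hRp : R < p)
    (V : Matrix (Fin n) (Fin p) ℝ → Submodule ℝ (E p))
    (hV : ∀ Y, IsRightSingularSubspace Y R (V Y))
    (X : Matrix (Fin n) (Fin p) ℝ) :
    (∃ l ≤ R + 1, IsBP V X 1 l) ∧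
    bpRow V X = 1 ∧ bpCol V X ≤ R + 1 := by
  have hRn : R ≤ n := le_trans hRmin (min_le_left n p)
  have hn : 1 ≤ n := le_trans hR1 hRn
  have hp1 : R + 1 ≤ p := hRp
  have hbreak : BreaksDownBlock V X 1 (R+1) := by
    apply sSup_angle_eq
    · rintro d ⟨Z, -, rfl⟩
      exact canonAngle_le_pi_div_two _ _
    · intro c hc
      obtain ⟨Z, hcor, hlt⟩ := key_corrupt hR1 hRn hRp V hV X c hc
      exact ⟨_, ⟨Z, hcor, rfl⟩, hlt⟩
  have hunit : ∃ w ∈ V X, ‖w‖ = (1:ℝ) := by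
    obtain ⟨vX, σX, hsys, hVX⟩ := hV X
    refine ⟨vX ⟨0, by omega⟩, ?_, hsys.1.1 _⟩
    rw [hVX]
    exact Submodule.subset_span ⟨⟨0, by omega⟩, by simpa using Nat.lt_of_lt_of_le Nat.zero_lt_one hR1, rfl⟩
  set L : Set ℕ := {l | BreaksDownBlock V X 1 l} with hLdef
  have hmem : (R+1) ∈ L := hbreak
  have hl₀mem : sInf L ∈ L := Nat.sInf_mem ⟨_, hmem⟩
  have hl₀le : sInf L ≤ R + 1 := Nat.sInf_le hmem
  have hl₀pos : 1 ≤ sInf L := by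
    rcases Nat.eq_zero_or_pos (sInf L) with h0 | h1
    · exact absurd (h0 ▸ hl₀mem) (not_breaks_zero hunit)
    · exact h1
  refine ⟨⟨sInf L, hl₀le, ?_⟩, ?_, ?_⟩
  · refine ⟨le_refl 1, hn, hl₀pos, le_trans hl₀le hp1, ?_, ?_⟩
    · intro k l hk1 hkn hll hlp
      exact breaksBlock_mono hl₀mem hk1 hkn hll hlp
    · intro k l hk1 hl1 hki hlj hne hbr
      have hkeq : k = 1 := le_antisymm hki hk1
      have hlne : l ≠ sInf L := fun hEq => hne (by rw [hkeq, hEq])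
      have hllt : l < sInf L := lt_of_le_of_ne hlj hlne
      rw [hkeq] at hbr
      exact Nat.notMem_of_lt_sInf hllt hbr
  · have hrow : BreaksDownRow V X 1 := breaksRow_of_block hbreak
    have hmem1 : 1 ∈ {k | 1 ≤ k ∧ k ≤ n ∧ BreaksDownRow V X k} := ⟨le_refl 1, hn, hrow⟩
    exact le_antisymm (Nat.sInf_le hmem1) (Nat.sInf_mem ⟨1, hmem1⟩).1
  · have hcol : BreaksDownCol V X (R+1) := breaksCol_of_block hbreak
    exact Nat.sInf_le ⟨by omega, hp1, hcol⟩
end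
end

section
/- Let X be any n×p real matrix and let R satisfy 1 ≤ R ≤ min(n,p) and R < p. Suppose each loss function ρ_ij: ℝ → [0,∞) is symmetric and satisfies ρ_ij(z) → ∞ as |z| → ∞, and the penalty functions P₁, P₂ are bounded above on the unit spheres S^{n−1} and S^{p−1}, respectively. Then for the ELSVD right singular subspace function V_R^ρ (for any selection of minimizers), there exists l ≤ R+1 such that (1,l) ∈ BP(V_R^ρ;X). In particular, bp_row(V_R^ρ;X) = 1 and bp_col(V_R^ρ;X) ≤ R+1. -/
noncomputable section
open scoped BigOperators
open Matrix

variable {n p m : ℕ}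

/-- The ELSVD objective `ρ(Y - d·u·vᵀ) + P₁(u) + P₂(v)`. -/
noncomputable def elsvdObj {n p : ℕ} (ρ : Fin n → Fin p → ℝ → ℝ)
    (P1 : E n → ℝ) (P2 : E p → ℝ) (Y : Matrix (Fin n) (Fin p) ℝ)
    (d : ℝ) (u : E n) (v : E p) : ℝ :=
  (∑ i, ∑ j, ρ i j (Y i j - d * u i * v j)) + P1 u + P2 v

/-- `(d, u, v)` is a sequence of ELSVD triples for `Y`: for each `r`, the triple
`(d r, u r, v r)` minimizes the ELSVD objective over `d' ≥ 0` and unit vectors `u'`, `v'`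
orthogonal to the previously obtained singular vectors. -/
def IsELSVD {n p : ℕ} (ρ : Fin n → Fin p → ℝ → ℝ) (P1 : E n → ℝ) (P2 : E p → ℝ)
    (R : ℕ) (Y : Matrix (Fin n) (Fin p) ℝ)
    (d : Fin R → ℝ) (u : Fin R → E n) (v : Fin R → E p) : Prop :=
  ∀ r : Fin R,
    0 ≤ d r ∧ ‖u r‖ = 1 ∧ ‖v r‖ = 1 ∧
    (∀ s : Fin R, s < r → (inner ℝ (u s) (u r) : ℝ) = 0 ∧ (inner ℝ (v s) (v r) : ℝ) = 0) ∧
    ∀ (d' : ℝ) (u' : E n) (v' : E p), 0 ≤ d' → ‖u'‖ = 1 → ‖v'‖ = 1 →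
      (∀ s : Fin R, s < r → (inner ℝ (u s) u' : ℝ) = 0 ∧ (inner ℝ (v s) v' : ℝ) = 0) →
      elsvdObj ρ P1 P2 Y (d r) (u r) (v r) ≤ elsvdObj ρ P1 P2 Y d' u' v'

-- === auxiliary lemmas ===
lemma my_inner_eq_sum {k : ℕ} (x y : E k) : (inner ℝ x y : ℝ) = ∑ i, x i * y i := by
  simp [PiLp.inner_apply, RCLike.inner_apply, mul_comm]

lemma my_coord_abs_le_norm {k : ℕ} (x : E k) (i : Fin k) : |x i| ≤ ‖x‖ := by
  rw [EuclideanSpace.norm_eq, ← Real.sqrt_sq_eq_abs]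
  apply Real.sqrt_le_sqrt
  have : x i ^ 2 ≤ ∑ j, ‖x j‖ ^ 2 := by
    have := Finset.single_le_sum (f := fun j => ‖x j‖ ^ 2)
      (fun j _ => by positivity) (Finset.mem_univ i)
    simpa [Real.norm_eq_abs, sq_abs] using this
  simpa using this

lemma my_norm_sq_eq_sum {k : ℕ} (x : E k) : ‖x‖ ^ 2 = ∑ i, (x i) ^ 2 := by
  rw [← real_inner_self_eq_norm_sq, my_inner_eq_sum]
  simp [sq]

lemma my_exists_ne_zero_map_eq_zero {M N : Type*} [AddCommGroup M] [Module ℝ M]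
    [AddCommGroup N] [Module ℝ N] [FiniteDimensional ℝ M] [FiniteDimensional ℝ N]
    (T : M →ₗ[ℝ] N) (h : Module.finrank ℝ N < Module.finrank ℝ M) :
    ∃ x, x ≠ 0 ∧ T x = 0 := by
  by_contra hc
  push_neg at hc
  have hinj : Function.Injective T := by
    rw [← LinearMap.ker_eq_bot, Submodule.eq_bot_iff]
    intro x hx
    by_contra hx0
    exact hc x hx0 hx
  exact absurd (LinearMap.finrank_le_finrank_of_injective hinj) (not_le.2 h)

lemma my_arccos_antitone : Antitone Real.arccos := by
  intro a b hab
  simp only [Real.arccos]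
  have := Real.monotone_arcsin hab
  linarith

lemma my_canonAngle_le {k : ℕ} (U W : Submodule ℝ (E k)) (hW : ∃ w ∈ W, ‖w‖ = 1) :
    canonAngle U W ≤ Real.pi / 2 := by
  rw [canonAngle, Real.arccos_le_pi_div_two]
  obtain ⟨w, hw, hw1⟩ := hW
  refine le_csInf ⟨‖(U.orthogonalProjection w : E k)‖, ⟨w, hw, hw1, rfl⟩⟩ ?_
  rintro r ⟨w', _, _, rfl⟩
  exact norm_nonneg _

lemma my_canonAngle_ge {k : ℕ} (U W : Submodule ℝ (E k)) {δ : ℝ}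
    (h : ∃ w ∈ W, ‖w‖ = 1 ∧ ‖(U.orthogonalProjection w : E k)‖ ≤ δ) :
    Real.arccos δ ≤ canonAngle U W := by
  obtain ⟨w, hw, hw1, hwδ⟩ := h
  apply my_arccos_antitone
  refine le_trans (csInf_le ?_ ⟨w, hw, hw1, rfl⟩) hwδ
  exact ⟨0, by rintro r ⟨w', _, _, rfl⟩; exact norm_nonneg _⟩

lemma my_proj_le {k R : ℕ} (U : Submodule ℝ (E k)) (v : Fin R → E k)
    (hUv : U = Submodule.span ℝ (Set.range v)) (hnorm : ∀ r, ‖v r‖ = 1)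
    (horth : ∀ r s, r ≠ s → (inner ℝ (v r) (v s) : ℝ) = 0) (r0 : Fin R) (w : E k)
    (hw : ∀ r, r ≠ r0 → (inner ℝ (v r) w : ℝ) = 0) :
    ‖(U.orthogonalProjection w : E k)‖
      ≤ |(inner ℝ (v r0) w : ℝ)| := by
  subst hUv
  set U := Submodule.span ℝ (Set.range v) with hU
  set P : E k := (U.orthogonalProjection w : E k) with hP
  have hPU : P ∈ U := SetLike.coe_mem _
  obtain ⟨c, hc⟩ := (Submodule.mem_span_range_iff_exists_fun ℝ).mp hPU
  have hvv : ∀ r, (inner ℝ (v r) (v r) : ℝ) = 1 := by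
    intro r
    rw [real_inner_self_eq_norm_sq, hnorm r]; norm_num
  have hcr : ∀ r, (inner ℝ (v r) P : ℝ) = c r := by
    intro r
    rw [← hc, inner_sum]
    rw [Finset.sum_eq_single r]
    · rw [real_inner_smul_right, hvv r, mul_one]
    · intro s _ hs
      rw [real_inner_smul_right, horth r s (Ne.symm hs), mul_zero]
    · intro h; exact absurd (Finset.mem_univ r) h
  have hPw : ∀ r, (inner ℝ (v r) P : ℝ) = (inner ℝ (v r) w : ℝ) := by
    intro r
    have hm : v r ∈ U := Submodule.subset_span ⟨r, rfl⟩
    have h0 := Submodule.starProjection_inner_eq_zero (K := U) w (v r) hm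
    have h0' : (inner ℝ (v r) (w - P) : ℝ) = 0 := by
      rw [real_inner_comm]; exact h0
    rw [inner_sub_right] at h0'
    linarith
  have hnP : ‖P‖ ^ 2 = c r0 * (inner ℝ (v r0) w : ℝ) := by
    rw [← real_inner_self_eq_norm_sq]
    nth_rewrite 1 [← hc]
    rw [sum_inner]
    rw [Finset.sum_eq_single r0]
    · rw [real_inner_smul_left, hPw]
    · intro s _ hs
      rw [real_inner_smul_left, hPw, hw s hs, mul_zero]
    · intro h; exact absurd (Finset.mem_univ r0) h
  have hc0 : |c r0| ≤ ‖P‖ := by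
    rw [← hcr r0]
    calc |(inner ℝ (v r0) P : ℝ)| ≤ ‖v r0‖ * ‖P‖ := abs_real_inner_le_norm _ _
    _ = ‖P‖ := by rw [hnorm r0, one_mul]
  have h1 : ‖P‖ ^ 2 ≤ ‖P‖ * |(inner ℝ (v r0) w : ℝ)| := by
    calc ‖P‖ ^ 2 = c r0 * (inner ℝ (v r0) w : ℝ) := hnP
    _ ≤ |c r0 * (inner ℝ (v r0) w : ℝ)| := le_abs_self _
    _ = |c r0| * |(inner ℝ (v r0) w : ℝ)| := abs_mul _ _
    _ ≤ ‖P‖ * |(inner ℝ (v r0) w : ℝ)| := by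
        apply mul_le_mul_of_nonneg_right hc0 (abs_nonneg _)
  rcases eq_or_lt_of_le (norm_nonneg P) with h0 | h0
  · rw [← h0]; exact abs_nonneg _
  · nlinarith

lemma my_sSup_eq (A : Set ℝ) (hub : ∀ a ∈ A, a ≤ Real.pi / 2)
    (h : ∀ δ : ℝ, 0 < δ → ∃ a ∈ A, Real.arccos δ ≤ a) : sSup A = Real.pi / 2 := by
  obtain ⟨a1, ha1, _⟩ := h 1 one_pos
  have hbdd : BddAbove A := ⟨Real.pi / 2, hub⟩
  apply le_antisymm (csSup_le ⟨a1, ha1⟩ hub)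
  have hseq : ∀ k : ℕ, Real.arccos (1 / (k + 1)) ≤ sSup A := by
    intro k
    obtain ⟨a, ha, hle⟩ := h (1 / (k + 1)) (by positivity)
    exact hle.trans (le_csSup hbdd ha)
  have hT : Filter.Tendsto (fun k : ℕ => Real.arccos (1 / (k + 1)))
      Filter.atTop (nhds (Real.pi / 2)) := by
    have := (Real.continuous_arccos.tendsto 0).comp tendsto_one_div_add_atTop_nhds_zero_nat
    simpa [Real.arccos_zero, Function.comp_def] using this
  exact le_of_tendsto' hT hseq

lemma my_sSup_mono (A A' : Set ℝ) (hub : ∀ a ∈ A', a ≤ Real.pi / 2)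
    (hsub : A ⊆ A') (hA : sSup A = Real.pi / 2) : sSup A' = Real.pi / 2 := by
  have hne : A.Nonempty := by
    by_contra hemp
    rw [Set.not_nonempty_iff_eq_empty] at hemp
    rw [hemp, Real.sSup_empty] at hA
    have := Real.pi_pos
    linarith
  apply le_antisymm (csSup_le (hne.mono hsub) hub)
  rw [← hA]
  exact csSup_le_csSup ⟨Real.pi / 2, hub⟩ hne hsub


set_option maxHeartbeats 2000000 in
/-- for the ELSVD right singular subspace function `V_R^ρ` (any selection of
minimizers), with each `ρ_ij` nonnegative, symmetric and diverging as `|z| → ∞`, and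
penalties bounded above on the unit spheres, there is `l ≤ R+1` with `(1,l) ∈ BP(V_R^ρ;X)`;
in particular `bp_row(V_R^ρ;X) = 1` and `bp_col(V_R^ρ;X) ≤ R+1`. -/
theorem stmt7 {n p : ℕ} (R : ℕ) (hR1 : 1 ≤ R) (hRmin : R ≤ min n p) (hRp : R < p)
    (ρ : Fin n → Fin p → ℝ → ℝ)
    (hρnonneg : ∀ i j z, 0 ≤ ρ i j z)
    (hρsymm : ∀ i j z, ρ i j (-z) = ρ i j z)
    (hρinf : ∀ i j, Filter.Tendsto (ρ i j) (Filter.cocompact ℝ) Filter.atTop)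
    (P1 : E n → ℝ) (P2 : E p → ℝ)
    (hP1 : ∃ B1 : ℝ, ∀ u : E n, ‖u‖ = 1 → P1 u ≤ B1)
    (hP2 : ∃ B2 : ℝ, ∀ v : E p, ‖v‖ = 1 → P2 v ≤ B2)
    (V : Matrix (Fin n) (Fin p) ℝ → Submodule ℝ (E p))
    (hV : ∀ Y, ∃ (d : Fin R → ℝ) (u : Fin R → E n) (v : Fin R → E p),
      IsELSVD ρ P1 P2 R Y d u v ∧ V Y = Submodule.span ℝ (Set.range v))
    (X : Matrix (Fin n) (Fin p) ℝ) :
    (∃ l ≤ R + 1, IsBP V X 1 l) ∧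
    bpRow V X = 1 ∧ bpCol V X ≤ R + 1 := by
  classical
  have hRn : R ≤ n := le_trans hRmin (min_le_left _ _)
  have hRp2 : R ≤ p := le_trans hRmin (min_le_right _ _)
  have hn : 1 ≤ n := le_trans hR1 hRn
  have hp1 : R + 1 ≤ p := hRp
  obtain ⟨B1, hB1⟩ := hP1
  obtain ⟨B2, hB2⟩ := hP2
  obtain ⟨dX, uX, vX, hIX, hVX⟩ := hV X
  have hR0 : 0 < R := hR1
  set r0 : Fin R := ⟨0, hR0⟩ with hr0
  clear_value r0
  have hnolt : ∀ s : Fin R, ¬ s < r0 := by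
    intro s hs
    exact Nat.not_lt_zero s.1 (by simpa [Fin.lt_def, hr0] using hs)
  have hvXn : ∀ r, ‖vX r‖ = 1 := fun r => (hIX r).2.2.1
  have hvXmem : ∀ r, vX r ∈ V X := by
    intro r
    rw [hVX]
    exact Submodule.subset_span ⟨r, rfl⟩
  -- uniform lower bound on penalties over the spheres
  obtain ⟨m₀, hm₀⟩ : ∃ m₀ : ℝ, ∀ (u' : E n) (v' : E p), ‖u'‖ = 1 → ‖v'‖ = 1 →
      m₀ ≤ P1 u' + P2 v' := by
    refine ⟨elsvdObj ρ P1 P2 X (dX r0) (uX r0) (vX r0) - ∑ i, ∑ j, ρ i j (X i j), ?_⟩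
    intro u' v' hu' hv'
    have hle := (hIX r0).2.2.2.2 0 u' v' le_rfl hu' hv'
      (fun s hs => absurd hs (hnolt s))
    simp only [elsvdObj, zero_mul, sub_zero] at hle
    simp only [elsvdObj]
    linarith
  -- the corrupted column set
  set J : Finset (Fin p) := Finset.univ.map (Fin.castLEEmb hp1) with hJ
  have hJcard : J.card = R + 1 := by simp [hJ]
  -- the corrupted direction c
  obtain ⟨c0, hc0ne, hc0J, hc0X⟩ : ∃ c0 : E p, c0 ≠ 0 ∧ (∀ j ∉ J, c0 j = 0) ∧
      (∀ r, ∑ j, vX r j * c0 j = 0) := by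
    let T : E p →ₗ[ℝ] ((Fin R → ℝ) × ({j : Fin p // j ∉ J} → ℝ)) :=
      { toFun := fun x => (fun r => ∑ j, vX r j * x j, fun j => x j.1)
        map_add' := by
          intro x y
          refine Prod.ext ?_ ?_ <;> funext z <;>
            simp [PiLp.add_apply, mul_add, Finset.sum_add_distrib]
        map_smul' := by
          intro a x
          refine Prod.ext ?_ ?_ <;> funext z <;>
            simp [PiLp.smul_apply, smul_eq_mul, Finset.mul_sum] <;> ring_nf <;>
            simp [mul_comm, mul_left_comm] }
    have hcardJ : Fintype.card {j : Fin p // j ∈ J} = R + 1 := by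
      rw [Fintype.card_coe, hJcard]
    have hcard : Fintype.card {j : Fin p // j ∉ J} = p - (R + 1) := by
      have := Fintype.card_subtype_compl (fun j : Fin p => j ∈ J)
      rw [this, hcardJ, Fintype.card_fin]
    have hrank : Module.finrank ℝ ((Fin R → ℝ) × ({j : Fin p // j ∉ J} → ℝ))
        < Module.finrank ℝ (E p) := by
      rw [Module.finrank_prod, Module.finrank_pi, Module.finrank_pi,
        finrank_euclideanSpace_fin, hcard, Fintype.card_fin]
      omega
    obtain ⟨x, hx0, hTx⟩ := my_exists_ne_zero_map_eq_zero T hrank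
    refine ⟨x, hx0, ?_, ?_⟩
    · intro j hj
      have := congrFun (congrArg Prod.snd hTx) ⟨j, hj⟩
      simpa [T] using this
    · intro r
      have := congrFun (congrArg Prod.fst hTx) r
      simpa [T] using this
  set c : E p := ‖c0‖⁻¹ • c0 with hc
  have hcn : ‖c‖ = 1 := by
    rw [hc]
    exact norm_smul_inv_norm hc0ne
  have hcJ : ∀ j ∉ J, c j = 0 := by
    intro j hj
    simp [hc, PiLp.smul_apply, hc0J j hj]
  have hcX : ∀ r, ∑ j, vX r j * c j = 0 := by
    intro r
    have : ∑ j, vX r j * c j = ‖c0‖⁻¹ * ∑ j, vX r j * c0 j := by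
      rw [Finset.mul_sum]
      apply Finset.sum_congr rfl
      intro j _
      simp [hc, PiLp.smul_apply]
      ring
    rw [this, hc0X r, mul_zero]
  clear_value c
  obtain ⟨j₀, hj₀⟩ : ∃ j₀, c j₀ ≠ 0 := by
    by_contra hall
    push_neg at hall
    have : c = 0 := by
      ext j
      simpa using hall j
    rw [this] at hcn
    simp at hcn
  have hj₀J : j₀ ∈ J := by
    by_contra hj
    exact hj₀ (hcJ j₀ hj)
  set γ : ℝ := |c j₀| with hγ
  have hγpos : 0 < γ := abs_pos.mpr hj₀
  clear_value γ
  set i₀ : Fin n := ⟨0, hn⟩ with hi₀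
  clear_value i₀
  -- the general upper bound on angles
  have hWX : ∃ w ∈ V X, ‖w‖ = 1 := ⟨vX r0, hvXmem r0, hvXn r0⟩
  have hangle_le : ∀ Y, canonAngle (V Y) (V X) ≤ Real.pi / 2 :=
    fun Y => my_canonAngle_le _ _ hWX
  set AS : ℕ → ℕ → Set ℝ :=
    fun k l => {d : ℝ | ∃ Z, BlockCorrupt X Z k l ∧ d = canonAngle (V Z) (V X)} with hAS
  have hub : ∀ k l, ∀ a ∈ AS k l, a ≤ Real.pi / 2 := by
    rintro k l a ⟨Z, _, rfl⟩
    exact hangle_le Z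
  -- THE KEY ANALYTIC STEP
  have key : ∀ δ : ℝ, 0 < δ → ∃ a ∈ AS 1 (R + 1), Real.arccos δ ≤ a := by
    intro δ hδ
    have hppos : (0:ℝ) < p := by
      have h0 : 0 < p := by omega
      exact_mod_cast h0
    set Cρ : ℝ := ∑ i, ∑ j, (ρ i j (X i j) + ρ i j 0) with hCρ
    clear_value Cρ
    set C' : ℝ := Cρ + B1 + B2 - m₀ with hC'
    clear_value C'
    have hK : ∀ j : Fin p, ∃ K : ℝ, ∀ z : ℝ, ρ i₀ j z ≤ C' → |z| ≤ K := by
      intro j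
      have hev : ∀ᶠ z in Filter.cocompact ℝ, C' < ρ i₀ j z :=
        (hρinf i₀ j).eventually (Filter.eventually_gt_atTop C')
      rw [Filter.eventually_iff, Filter.mem_cocompact] at hev
      obtain ⟨tc, htc, hts⟩ := hev
      obtain ⟨K, hKb⟩ := htc.isBounded.subset_closedBall 0
      refine ⟨K, fun z hz => ?_⟩
      by_contra hzK
      have hzt : z ∉ tc := by
        intro hmem
        have h2 := hKb hmem
        rw [Metric.mem_closedBall, Real.dist_eq, sub_zero] at h2
        exact hzK h2
      exact absurd hz (not_le.2 (hts hzt))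
    choose K hKspec using hK
    set B : ℝ := 1 + ∑ j, (|K j| + |X i₀ j|) with hB
    clear_value B
    have hBterm : ∀ j : Fin p, |K j| + |X i₀ j| ≤ ∑ j', (|K j'| + |X i₀ j'|) :=
      fun j => Finset.single_le_sum (f := fun j' => |K j'| + |X i₀ j'|) (fun j' _ => by positivity) (Finset.mem_univ j)
    have hB1' : (1:ℝ) ≤ B := by
      rw [hB]
      have h0 : (0:ℝ) ≤ ∑ j, (|K j| + |X i₀ j|) :=
        Finset.sum_nonneg (fun j _ => by positivity)
      linarith
    have hBpos : (0:ℝ) < B := by linarith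
    have hKB : ∀ j, K j ≤ B := by
      intro j
      have h1 := hBterm j
      have h2 := le_abs_self (K j)
      have h3 : (0:ℝ) ≤ |X i₀ j| := abs_nonneg _
      rw [hB]
      linarith
    have hKXB : ∀ j, K j + |X i₀ j| ≤ B := by
      intro j
      have h1 := hBterm j
      have h2 := le_abs_self (K j)
      rw [hB]
      linarith
    set M : ℝ := (B + p * B / δ) / γ with hM
    have hMγ : M * γ = B + p * B / δ := div_mul_cancel₀ _ (ne_of_gt hγpos)
    clear_value M
    have hMpos : 0 ≤ M := by
      rw [hM]
      positivity
    set Z : Matrix (Fin n) (Fin p) ℝ :=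
      Matrix.of fun i j => if i = i₀ ∧ j ∈ J then M * c j else X i j with hZdef
    have hZval : ∀ i j, Z i j = if i = i₀ ∧ j ∈ J then M * c j else X i j :=
      fun i j => rfl
    clear_value Z
    have hBC : BlockCorrupt X Z 1 (R + 1) := by
      refine ⟨{i₀}, J, Finset.card_singleton _, hJcard, ?_⟩
      intro i j hij
      rw [hZval, if_neg]
      rintro ⟨rfl, hjJ⟩
      rcases hij with h | h
      · exact h (Finset.mem_singleton_self _)
      · exact h hjJ
    obtain ⟨d, u, v, hIZ, hVZ⟩ := hV Z
    have hvn : ∀ r, ‖v r‖ = 1 := fun r => (hIZ r).2.2.1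
    have hun : ∀ r, ‖u r‖ = 1 := fun r => (hIZ r).2.1
    have hvo : ∀ r s : Fin R, r ≠ s → (inner ℝ (v r) (v s) : ℝ) = 0 := by
      intro r s hrs
      rcases lt_or_gt_of_ne hrs with h | h
      · exact ((hIZ s).2.2.2.1 r h).2
      · rw [real_inner_comm]
        exact ((hIZ r).2.2.2.1 s h).2
    set t : ℝ := d r0 * u r0 i₀ with ht
    clear_value t
    have hsingle_norm : ‖EuclideanSpace.single i₀ (1:ℝ)‖ = 1 := by
      simp [EuclideanSpace.norm_single]
    have hmin := (hIZ r0).2.2.2.2 M (EuclideanSpace.single i₀ (1:ℝ)) c hMpos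
      hsingle_norm hcn (fun s hs => absurd hs (hnolt s))
    have hRHS : elsvdObj ρ P1 P2 Z M (EuclideanSpace.single i₀ 1) c ≤ Cρ + B1 + B2 := by
      simp only [elsvdObj]
      have hsum : ∑ i, ∑ j, ρ i j (Z i j - M * EuclideanSpace.single i₀ (1:ℝ) i * c j)
          ≤ Cρ := by
        rw [hCρ]
        refine Finset.sum_le_sum (fun i _ => Finset.sum_le_sum (fun j _ => ?_))
        by_cases hi : i = i₀
        · by_cases hj : j ∈ J
          · have h1 : Z i j = M * c j := by rw [hZval, if_pos ⟨hi, hj⟩]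
            have h2 : EuclideanSpace.single i₀ (1:ℝ) i = 1 := by
              simp [EuclideanSpace.single_apply, hi]
            rw [h1, h2, mul_one, sub_self]
            have h3 := hρnonneg i j (X i j)
            linarith
          · have h1 : Z i j = X i j := by
              rw [hZval, if_neg (fun h => hj h.2)]
            rw [h1, hcJ j hj, mul_zero, sub_zero]
            have h3 := hρnonneg i j 0
            linarith
        · have h1 : Z i j = X i j := by
            rw [hZval, if_neg (fun h => hi h.1)]
          have h2 : EuclideanSpace.single i₀ (1:ℝ) i = 0 := by
            simp [EuclideanSpace.single_apply, hi]
          rw [h1, h2, mul_zero, zero_mul, sub_zero]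
          have h3 := hρnonneg i j 0
          linarith
      have hb1 := hB1 _ hsingle_norm
      have hb2 := hB2 _ hcn
      linarith
    have hressum : ∑ i, ∑ j, ρ i j (Z i j - d r0 * u r0 i * v r0 j) ≤ C' := by
      have hlow := hm₀ (u r0) (v r0) (hun r0) (hvn r0)
      have hobj : elsvdObj ρ P1 P2 Z (d r0) (u r0) (v r0) ≤ Cρ + B1 + B2 :=
        le_trans hmin hRHS
      simp only [elsvdObj] at hobj
      rw [hC']
      linarith
    have hcell : ∀ j, |Z i₀ j - t * v r0 j| ≤ K j := by
      intro j
      apply hKspec j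
      have h1 : ρ i₀ j (Z i₀ j - d r0 * u r0 i₀ * v r0 j)
          ≤ ∑ j', ρ i₀ j' (Z i₀ j' - d r0 * u r0 i₀ * v r0 j') :=
        Finset.single_le_sum (f := fun j' => ρ i₀ j' (Z i₀ j' - d r0 * u r0 i₀ * v r0 j'))
          (fun j' _ => hρnonneg _ _ _) (Finset.mem_univ j)
      have h2 : ∑ j', ρ i₀ j' (Z i₀ j' - d r0 * u r0 i₀ * v r0 j')
          ≤ ∑ i, ∑ j', ρ i j' (Z i j' - d r0 * u r0 i * v r0 j') :=
        Finset.single_le_sum (f := fun i => ∑ j', ρ i j' (Z i j' - d r0 * u r0 i * v r0 j'))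
          (fun i _ => Finset.sum_nonneg (fun j' _ => hρnonneg _ _ _))
          (Finset.mem_univ i₀)
      rw [ht]
      linarith
    have hvcoord : ∀ j, |v r0 j| ≤ 1 := by
      intro j
      have h1 := my_coord_abs_le_norm (v r0) j
      rw [hvn r0] at h1
      exact h1
    have htlb' : ↑p * B / δ ≤ |t| := by
      have h1 : |M * c j₀ - t * v r0 j₀| ≤ K j₀ := by
        have h0 := hcell j₀
        rwa [hZval, if_pos ⟨rfl, hj₀J⟩] at h0
      have h2 : M * γ = |M * c j₀| := by
        rw [abs_mul, abs_of_nonneg hMpos, hγ]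
      have h3 : |M * c j₀| ≤ |M * c j₀ - t * v r0 j₀| + |t * v r0 j₀| := by
        calc |M * c j₀| = |(M * c j₀ - t * v r0 j₀) + t * v r0 j₀| := by
              congr 1
              ring
        _ ≤ _ := abs_add_le _ _
      have h4 : |t * v r0 j₀| ≤ |t| := by
        rw [abs_mul]
        exact mul_le_of_le_one_right (abs_nonneg t) (hvcoord j₀)
      have h6 := hKB j₀
      linarith only [h1, h2, h3, h4, h6, hMγ]
    have htpos : 0 < |t| := lt_of_lt_of_le (by positivity) htlb'
    have ht0 : t ≠ 0 := by
      intro h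
      rw [h, abs_zero] at htpos
      exact lt_irrefl 0 htpos
    set sc : ℝ := M / t with hsc
    clear_value sc
    have hcoord : ∀ j, |v r0 j - sc * c j| ≤ B / |t| := by
      intro j
      have hkey : |t| * |v r0 j - sc * c j| = |t * v r0 j - M * c j| := by
        rw [← abs_mul]
        congr 1
        rw [hsc, mul_sub, ← mul_assoc, mul_div_cancel₀ M ht0]
      have hmain : |t * v r0 j - M * c j| ≤ B := by
        by_cases hj : j ∈ J
        · have h0 := hcell j
          rw [hZval, if_pos ⟨rfl, hj⟩] at h0
          have hKBj := hKB j
          calc |t * v r0 j - M * c j| = |M * c j - t * v r0 j| := abs_sub_comm _ _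
          _ ≤ K j := h0
          _ ≤ B := hKBj
        · have hc0 : c j = 0 := hcJ j hj
          have h0 := hcell j
          rw [hZval, if_neg (fun h => hj h.2)] at h0
          have hKXBj := hKXB j
          calc |t * v r0 j - M * c j| = |t * v r0 j| := by rw [hc0, mul_zero, sub_zero]
          _ = |(t * v r0 j - X i₀ j) + X i₀ j| := by
              congr 1
              ring
          _ ≤ |t * v r0 j - X i₀ j| + |X i₀ j| := abs_add_le _ _
          _ = |X i₀ j - t * v r0 j| + |X i₀ j| := by rw [abs_sub_comm]
          _ ≤ K j + |X i₀ j| := by linarith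
          _ ≤ B := hKXBj
      rw [le_div_iff₀ htpos]
      calc |v r0 j - sc * c j| * |t| = |t| * |v r0 j - sc * c j| := mul_comm _ _
      _ = |t * v r0 j - M * c j| := hkey
      _ ≤ B := hmain
    have hvsc : ‖v r0 - sc • c‖ ≤ δ := by
      have hBt : 0 ≤ B / |t| := by positivity
      have hsq : ‖v r0 - sc • c‖ ^ 2 ≤ δ ^ 2 := by
        rw [my_norm_sq_eq_sum]
        have hco : ∀ j : Fin p, ((v r0 - sc • c) j) ^ 2 ≤ (B / |t|) ^ 2 := by
          intro j
          have h1 : (v r0 - sc • c) j = v r0 j - sc * c j := by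
            simp [PiLp.sub_apply, PiLp.smul_apply, smul_eq_mul]
          rw [h1, ← sq_abs]
          exact pow_le_pow_left₀ (abs_nonneg _) (hcoord j) 2
        have hBt2 : B / |t| ≤ δ / p := by
          rw [div_le_div_iff₀ htpos hppos]
          have h7 : ↑p * B ≤ |t| * δ := (div_le_iff₀ hδ).mp htlb'
          linarith only [h7]
        have hp1' : (1:ℝ) ≤ p := by
          have h0 : 1 ≤ p := by omega
          exact_mod_cast h0
        calc ∑ j, ((v r0 - sc • c) j) ^ 2 ≤ ∑ _j : Fin p, (B / |t|) ^ 2 :=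
          Finset.sum_le_sum (fun j _ => hco j)
        _ = p * (B / |t|) ^ 2 := by
          rw [Finset.sum_const, Finset.card_univ, Fintype.card_fin, nsmul_eq_mul]
        _ ≤ p * (δ / p) ^ 2 :=
          mul_le_mul_of_nonneg_left (pow_le_pow_left₀ hBt hBt2 2) (le_of_lt hppos)
        _ = δ ^ 2 / p := by field_simp
        _ ≤ δ ^ 2 := div_le_self (sq_nonneg δ) hp1'
      calc ‖v r0 - sc • c‖ = Real.sqrt (‖v r0 - sc • c‖ ^ 2) :=
        (Real.sqrt_sq (norm_nonneg _)).symm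
      _ ≤ Real.sqrt (δ ^ 2) := Real.sqrt_le_sqrt hsq
      _ = δ := Real.sqrt_sq hδ.le
    have hvXo : ∀ r s : Fin R, r ≠ s → (inner ℝ (vX r) (vX s) : ℝ) = 0 := by
      intro r s hrs
      rcases lt_or_gt_of_ne hrs with h | h
      · exact ((hIX s).2.2.2.1 r h).2
      · rw [real_inner_comm]
        exact ((hIX r).2.2.2.1 s h).2
    obtain ⟨a, ha0, haort⟩ : ∃ a : Fin R → ℝ, a ≠ 0 ∧ ∀ r : Fin R, r ≠ r0 →
        ∑ s', a s' * (inner ℝ (v r) (vX s') : ℝ) = 0 := by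
      let T' : (Fin R → ℝ) →ₗ[ℝ] ({r : Fin R // r ≠ r0} → ℝ) :=
        { toFun := fun a => fun r => ∑ s', a s' * (inner ℝ (v r.1) (vX s') : ℝ)
          map_add' := by
            intro x y
            funext r
            simp [add_mul, Finset.sum_add_distrib]
          map_smul' := by
            intro b x
            funext r
            simp only [Pi.smul_apply, smul_eq_mul, RingHom.id_apply, Finset.mul_sum]
            apply Finset.sum_congr rfl
            intro s' _
            ring }
      have hcard1 : Fintype.card {r : Fin R // r = r0} = 1 := Fintype.card_subtype_eq r0
      have hcard : Fintype.card {r : Fin R // r ≠ r0} = R - 1 := by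
        have h0 := Fintype.card_subtype_compl (fun r : Fin R => r = r0)
        rw [h0, hcard1, Fintype.card_fin]
      have hrank : Module.finrank ℝ ({r : Fin R // r ≠ r0} → ℝ)
          < Module.finrank ℝ (Fin R → ℝ) := by
        rw [Module.finrank_pi, Module.finrank_pi, hcard, Fintype.card_fin]
        omega
      obtain ⟨a, ha0, hTa⟩ := my_exists_ne_zero_map_eq_zero T' hrank
      refine ⟨a, ha0, fun r hr => ?_⟩
      have h0 := congrFun hTa ⟨r, hr⟩
      simpa [T'] using h0
    set w0 : E p := ∑ s', a s' • vX s' with hw0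
    clear_value w0
    have hw0i : ∀ r, (inner ℝ (v r) w0 : ℝ) = ∑ s', a s' * (inner ℝ (v r) (vX s') : ℝ) := by
      intro r
      rw [hw0, inner_sum]
      apply Finset.sum_congr rfl
      intro s' _
      rw [real_inner_smul_right]
    have hw0X : ∀ q : Fin R, (inner ℝ (vX q) w0 : ℝ) = a q := by
      intro q
      rw [hw0, inner_sum, Finset.sum_eq_single q]
      · rw [real_inner_smul_right, real_inner_self_eq_norm_sq, hvXn q]
        norm_num
      · intro s' _ hs'
        rw [real_inner_smul_right, hvXo q s' (Ne.symm hs'), mul_zero]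
      · intro h
        exact absurd (Finset.mem_univ q) h
    have hw0ne : w0 ≠ 0 := by
      intro h
      apply ha0
      funext q
      have h2 : (inner ℝ (vX q) w0 : ℝ) = 0 := by rw [h, inner_zero_right]
      rw [hw0X q] at h2
      exact h2
    set w : E p := ‖w0‖⁻¹ • w0 with hw
    clear_value w
    have hwnorm : ‖w‖ = 1 := by
      rw [hw]
      exact norm_smul_inv_norm hw0ne
    have hwmem : w ∈ V X := by
      rw [hVX, hw, hw0]
      exact Submodule.smul_mem _ _
        (Submodule.sum_mem _
          (fun s' _ => Submodule.smul_mem _ _ (Submodule.subset_span ⟨s', rfl⟩)))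
    have hworth : ∀ r, r ≠ r0 → (inner ℝ (v r) w : ℝ) = 0 := by
      intro r hr
      rw [hw, real_inner_smul_right, hw0i, haort r hr, mul_zero]
    have hwc : (inner ℝ c w : ℝ) = 0 := by
      have hcvX : ∀ s', (inner ℝ c (vX s') : ℝ) = 0 := by
        intro s'
        rw [real_inner_comm, my_inner_eq_sum]
        exact hcX s'
      rw [hw, real_inner_smul_right, hw0, inner_sum]
      have h0 : ∀ s' ∈ Finset.univ, (inner ℝ c (a s' • vX s') : ℝ) = 0 := by
        intro s' _
        rw [real_inner_smul_right, hcvX, mul_zero]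
      rw [Finset.sum_congr rfl h0]
      simp
    have hsplit : (inner ℝ (v r0) w : ℝ)
        = (inner ℝ (v r0 - sc • c) w : ℝ) + sc * (inner ℝ c w : ℝ) := by
      rw [inner_sub_left, real_inner_smul_left]
      ring
    have hivw : |(inner ℝ (v r0) w : ℝ)| ≤ δ := by
      rw [hsplit, hwc, mul_zero, add_zero]
      calc |(inner ℝ (v r0 - sc • c) w : ℝ)| ≤ ‖v r0 - sc • c‖ * ‖w‖ :=
        abs_real_inner_le_norm _ _
      _ = ‖v r0 - sc • c‖ := by rw [hwnorm, mul_one]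
      _ ≤ δ := hvsc
    have hproj : ‖((V Z).orthogonalProjection w : E p)‖ ≤ δ :=
      le_trans (my_proj_le (V Z) v hVZ hvn hvo r0 w hworth) hivw
    exact ⟨canonAngle (V Z) (V X), ⟨Z, hBC, rfl⟩,
      my_canonAngle_ge _ _ ⟨w, hwmem, hwnorm, hproj⟩⟩

  have hbase : BreaksDownBlock V X 1 (R + 1) := my_sSup_eq _ (hub 1 (R + 1)) key
  -- monotonicity of block corruption
  have hcorr_mono : ∀ (Z : Matrix (Fin n) (Fin p) ℝ) (k l k' l' : ℕ),
      BlockCorrupt X Z k l → k ≤ k' → k' ≤ n → l ≤ l' → l' ≤ p →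
      BlockCorrupt X Z k' l' := by
    rintro Z k l k' l' ⟨I, Jf, hI, hJf, hcond⟩ hkk' hk'n hll' hl'p
    obtain ⟨I', hII', _, hI'⟩ := Finset.exists_subsuperset_card_eq (n := k') (I.subset_univ)
      (by rw [hI]; exact hkk') (by simpa using hk'n)
    obtain ⟨J', hJJ', _, hJ'⟩ := Finset.exists_subsuperset_card_eq (n := l') (Jf.subset_univ)
      (by rw [hJf]; exact hll') (by simpa using hl'p)
    refine ⟨I', J', hI', hJ', ?_⟩
    intro i j hij
    apply hcond
    rcases hij with h | h
    · exact Or.inl (fun hmem => h (hII' hmem))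
    · exact Or.inr (fun hmem => h (hJJ' hmem))
  have hmono : ∀ k l k' l', BreaksDownBlock V X k l → k ≤ k' → k' ≤ n → l ≤ l' →
      l' ≤ p → BreaksDownBlock V X k' l' := by
    intro k l k' l' hb hkk' hk'n hll' hl'p
    refine my_sSup_mono (AS k l) (AS k' l') (hub k' l') ?_ hb
    rintro a ⟨Z, hZ, rfl⟩
    exact ⟨Z, hcorr_mono Z k l k' l' hZ hkk' hk'n hll' hl'p, rfl⟩
  -- row and column breakdown
  have hrow : BreaksDownRow V X 1 := by
    refine my_sSup_mono (AS 1 (R + 1)) _ ?_ ?_ hbase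
    · rintro a ⟨Z, _, rfl⟩
      exact hangle_le Z
    · rintro a ⟨Z, ⟨I, Jf, hI, _, hcond⟩, rfl⟩
      exact ⟨Z, ⟨I, hI, fun i hi j => hcond i j (Or.inl hi)⟩, rfl⟩
  have hcol : BreaksDownCol V X (R + 1) := by
    refine my_sSup_mono (AS 1 (R + 1)) _ ?_ ?_ hbase
    · rintro a ⟨Z, _, rfl⟩
      exact hangle_le Z
    · rintro a ⟨Z, ⟨I, Jf, _, hJf, hcond⟩, rfl⟩
      exact ⟨Z, ⟨Jf, hJf, fun j hj i => hcond i j (Or.inr hj)⟩, rfl⟩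
  -- the minimal breakdown column count
  set S1 : Set ℕ := {l | 1 ≤ l ∧ BreaksDownBlock V X 1 l} with hS1
  have hS1mem : R + 1 ∈ S1 := ⟨by omega, hbase⟩
  have hlstar_le : sInf S1 ≤ R + 1 := Nat.sInf_le hS1mem
  obtain ⟨hlstar1, hlstarB⟩ : 1 ≤ sInf S1 ∧ BreaksDownBlock V X 1 (sInf S1) :=
    Nat.sInf_mem ⟨R + 1, hS1mem⟩
  refine ⟨⟨sInf S1, hlstar_le, le_rfl, hn, hlstar1, le_trans hlstar_le hp1, ?_, ?_⟩, ?_, ?_⟩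
  · intro k l hk hkn hl hlp
    exact hmono 1 (sInf S1) k l hlstarB hk hkn hl hlp
  · intro k l hk1 hl1 hk hl hne hbrk
    have hkeq : k = 1 := le_antisymm hk hk1
    subst hkeq
    have hllt : l < sInf S1 := by
      rcases lt_or_eq_of_le hl with h | h
      · exact h
      · exact absurd (by rw [h]) hne
    exact (Nat.notMem_of_lt_sInf hllt) ⟨hl1, hbrk⟩
  · have h1mem : 1 ∈ {k : ℕ | 1 ≤ k ∧ k ≤ n ∧ BreaksDownRow V X k} := ⟨le_rfl, hn, hrow⟩
    exact le_antisymm (Nat.sInf_le h1mem) (Nat.sInf_mem ⟨1, h1mem⟩).1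
  · exact Nat.sInf_le ⟨by omega, hp1, hcol⟩
end
end
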